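/- Let n ≥ 1 and let A be the imbalanced (2n+1)-RPS tournament payoff matrix. Define v by v (r i) = v (p i) = 3^(-i) for 1 ≤ i ≤ n and v s = 3^(-n). Then v is a probability vector (entries nonnegative summing to 1), v is everywhere positive, and A.mulVec v = 0. Hence the imbalanced (2n+1)-RPS is playable, and v is its unique Nash equilibrium strategy. -/

import Mathlib

open Matrix

/-- Vertices of the imbalanced `(2n+1)`-RPS: `Sum.inl i` is `r (i+1)`,
`Sum.inr (Sum.inl i)` is `p (i+1)`, and `Sum.inr (Sum.inr ())` is `s`. -/
abbrev ImbVertex (n : ℕ) := Fin n ⊕ Fin n ⊕ Unit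

/-- The beats relation of the imbalanced `(2n+1)`-RPS:
`r i` beats `r j` iff `i < j`; `r i` beats `p j` iff `i ≠ j`; `r i` beats `s`;
`p i` beats `r j` iff `j = i`; `p i` beats `p j` iff `j < i`; `s` beats every `p i`. -/
def ImbBeats {n : ℕ} : ImbVertex n → ImbVertex n → Prop
  | Sum.inl i, Sum.inl j => i < j
  | Sum.inl i, Sum.inr (Sum.inl j) => i ≠ j
  | Sum.inl _, Sum.inr (Sum.inr _) => True
  | Sum.inr (Sum.inl i), Sum.inl j => j = i
  | Sum.inr (Sum.inl i), Sum.inr (Sum.inl j) => j < i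
  | Sum.inr (Sum.inl _), Sum.inr (Sum.inr _) => False
  | Sum.inr (Sum.inr _), Sum.inl _ => False
  | Sum.inr (Sum.inr _), Sum.inr (Sum.inl _) => True
  | Sum.inr (Sum.inr _), Sum.inr (Sum.inr _) => False

/-- The payoff matrix of the imbalanced `(2n+1)`-RPS. -/
noncomputable def ImbRPS (n : ℕ) : Matrix (ImbVertex n) (ImbVertex n) ℝ :=
  Matrix.of fun a b => by
    classical exact if ImbBeats a b then 1 else if ImbBeats b a then -1 else 0

/-- The candidate Nash distribution: `v (r i) = v (p i) = 3⁻ⁱ` (1-based `i`) and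
`v s = 3⁻ⁿ`. -/
noncomputable def ImbNash (n : ℕ) : ImbVertex n → ℝ
  | Sum.inl i => ((3 : ℝ))⁻¹ ^ ((i : ℕ) + 1)
  | Sum.inr (Sum.inl i) => ((3 : ℝ))⁻¹ ^ ((i : ℕ) + 1)
  | Sum.inr (Sum.inr _) => ((3 : ℝ))⁻¹ ^ n

open Finset

namespace ImbAux
variable {n : ℕ}

lemma entry_rr (i j : Fin n) : ImbRPS n (Sum.inl i) (Sum.inl j)
    = if i < j then 1 else if j < i then -1 else 0 := by
  simp only [ImbRPS, Matrix.of_apply, ImbBeats]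
  by_cases h : i < j
  · simp [h]
  · by_cases h' : j < i <;> simp [h, h']

lemma entry_rp (i j : Fin n) : ImbRPS n (Sum.inl i) (Sum.inr (Sum.inl j))
    = if i = j then -1 else 1 := by
  simp only [ImbRPS, Matrix.of_apply, ImbBeats]
  by_cases h : i = j
  · simp [h]
  · simp [h, Ne.symm h]

lemma entry_rs (i : Fin n) (u : Unit) : ImbRPS n (Sum.inl i) (Sum.inr (Sum.inr u)) = 1 := by
  simp [ImbRPS, ImbBeats]

lemma entry_pr (i j : Fin n) : ImbRPS n (Sum.inr (Sum.inl i)) (Sum.inl j)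
    = if i = j then 1 else -1 := by
  simp only [ImbRPS, Matrix.of_apply, ImbBeats]
  by_cases h : i = j
  · simp [h]
  · simp [h, Ne.symm h]

lemma entry_pp (i j : Fin n) : ImbRPS n (Sum.inr (Sum.inl i)) (Sum.inr (Sum.inl j))
    = if j < i then 1 else if i < j then -1 else 0 := by
  simp only [ImbRPS, Matrix.of_apply, ImbBeats]
  by_cases h : j < i
  · simp [h]
  · by_cases h' : i < j <;> simp [h, h']

lemma entry_ps (i : Fin n) (u : Unit) :
    ImbRPS n (Sum.inr (Sum.inl i)) (Sum.inr (Sum.inr u)) = -1 := by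
  simp [ImbRPS, ImbBeats]

lemma entry_sr (u : Unit) (j : Fin n) : ImbRPS n (Sum.inr (Sum.inr u)) (Sum.inl j) = -1 := by
  simp [ImbRPS, ImbBeats]

lemma entry_sp (u : Unit) (j : Fin n) :
    ImbRPS n (Sum.inr (Sum.inr u)) (Sum.inr (Sum.inl j)) = 1 := by
  simp [ImbRPS, ImbBeats]

lemma entry_ss (u v : Unit) :
    ImbRPS n (Sum.inr (Sum.inr u)) (Sum.inr (Sum.inr v)) = 0 := by
  simp [ImbRPS, ImbBeats]



/-- ℕ-indexed version of the `r` coordinates of `w`. -/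
noncomputable def xv (w : ImbVertex n → ℝ) : ℕ → ℝ :=
  fun k => if h : k < n then w (Sum.inl ⟨k, h⟩) else 0

noncomputable def yv (w : ImbVertex n → ℝ) : ℕ → ℝ :=
  fun k => if h : k < n then w (Sum.inr (Sum.inl ⟨k, h⟩)) else 0

lemma xv_coe (w : ImbVertex n → ℝ) (j : Fin n) : xv w j.val = w (Sum.inl j) := by
  simp [xv, j.isLt]

lemma yv_coe (w : ImbVertex n → ℝ) (j : Fin n) : yv w j.val = w (Sum.inr (Sum.inl j)) := by
  simp [yv, j.isLt]

lemma sum_if_lt (f : ℕ → ℝ) {m N : ℕ} (h : m ≤ N) :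
    ∑ k ∈ range N, (if k < m then f k else 0) = ∑ k ∈ range m, f k := by
  rw [← Finset.sum_subset (Finset.range_subset_range.2 h)
      (f := fun k => if k < m then f k else 0)
      (fun k _ hk => if_neg (by simp at hk ⊢; omega))]
  exact Finset.sum_congr rfl fun k hk => if_pos (Finset.mem_range.1 hk)

lemma sum_if_gt (f : ℕ → ℝ) (m N : ℕ) :
    ∑ k ∈ range N, (if m < k then f k else 0) = ∑ k ∈ Ico (m+1) N, f k := by
  rw [← Finset.sum_filter]
  apply Finset.sum_congr _ (fun _ _ => rfl)
  ext k; simp only [Finset.mem_filter, Finset.mem_range, Finset.mem_Ico]; omega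

lemma sum_range_split (f : ℕ → ℝ) {k N : ℕ} (h : k < N) :
    ∑ j ∈ range N, f j = (∑ j ∈ range k, f j) + f k + ∑ j ∈ Ico (k+1) N, f j := by
  rw [Finset.range_eq_Ico, ← Finset.sum_Ico_consecutive f (Nat.zero_le k) h.le,
    Finset.sum_eq_sum_Ico_succ_bot h, ← Finset.range_eq_Ico]
  ring

lemma sum_fin_x (w : ImbVertex n → ℝ) :
    ∑ j : Fin n, w (Sum.inl j) = ∑ k ∈ range n, xv w k := by
  rw [← Fin.sum_univ_eq_sum_range (xv w) n]
  exact Finset.sum_congr rfl fun j _ => (xv_coe w j).symm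

lemma sum_fin_y (w : ImbVertex n → ℝ) :
    ∑ j : Fin n, w (Sum.inr (Sum.inl j)) = ∑ k ∈ range n, yv w k := by
  rw [← Fin.sum_univ_eq_sum_range (yv w) n]
  exact Finset.sum_congr rfl fun j _ => (yv_coe w j).symm

lemma row_r (w : ImbVertex n → ℝ) (i : Fin n) :
    (ImbRPS n).mulVec w (Sum.inl i)
    = ((∑ k ∈ Ico (i.val+1) n, xv w k) - ∑ k ∈ range i.val, xv w k)
      + ((∑ k ∈ range n, yv w k) - 2 * yv w i.val)
      + w (Sum.inr (Sum.inr ())) := by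
  simp only [Matrix.mulVec, dotProduct, Fintype.sum_sum_type]
  have h1 : ∑ j : Fin n, ImbRPS n (Sum.inl i) (Sum.inl j) * w (Sum.inl j)
      = (∑ k ∈ Ico (i.val+1) n, xv w k) - ∑ k ∈ range i.val, xv w k := by
    have e : ∀ j : Fin n, ImbRPS n (Sum.inl i) (Sum.inl j) * w (Sum.inl j)
        = (if i.val < j.val then xv w j.val else 0) - (if j.val < i.val then xv w j.val else 0) := by
      intro j
      rw [entry_rr, xv_coe]
      simp only [Fin.lt_def]
      rcases lt_trichotomy (i:ℕ) (j:ℕ) with h | h | h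
      · simp [h, asymm h]
      · simp [h, lt_irrefl]
      · simp [h, asymm h]
    calc ∑ j : Fin n, ImbRPS n (Sum.inl i) (Sum.inl j) * w (Sum.inl j)
        = ∑ j : Fin n, ((fun k => (if i.val < k then xv w k else 0)
            - (if k < i.val then xv w k else 0)) j.val) :=
          Finset.sum_congr rfl fun j _ => e j
      _ = ∑ k ∈ range n, ((if i.val < k then xv w k else 0)
            - (if k < i.val then xv w k else 0)) :=
          Fin.sum_univ_eq_sum_range
            (fun k => (if i.val < k then xv w k else 0) - (if k < i.val then xv w k else 0)) n
      _ = (∑ k ∈ Ico (i.val+1) n, xv w k) - ∑ k ∈ range i.val, xv w k := by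
          rw [Finset.sum_sub_distrib, sum_if_gt, sum_if_lt _ i.isLt.le]
  have h2 : ∑ j : Fin n, ImbRPS n (Sum.inl i) (Sum.inr (Sum.inl j)) * w (Sum.inr (Sum.inl j))
      = (∑ k ∈ range n, yv w k) - 2 * yv w i.val := by
    have : ∀ j : Fin n, ImbRPS n (Sum.inl i) (Sum.inr (Sum.inl j)) * w (Sum.inr (Sum.inl j))
        = w (Sum.inr (Sum.inl j)) - (if j = i then 2 * w (Sum.inr (Sum.inl j)) else 0) := by
      intro j
      rw [entry_rp]
      by_cases h : i = j
      · simp [h]; ring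
      · simp [h, Ne.symm h]
    rw [Finset.sum_congr rfl fun j _ => this j, Finset.sum_sub_distrib, sum_fin_y,
      Finset.sum_ite_eq' Finset.univ i (fun j => 2 * w (Sum.inr (Sum.inl j)))]
    simp [yv_coe]
  rw [h1, h2]
  simp only [entry_rs, one_mul, Finset.univ_unique, Finset.sum_singleton]
  ring

lemma row_p (w : ImbVertex n → ℝ) (i : Fin n) :
    (ImbRPS n).mulVec w (Sum.inr (Sum.inl i))
    = (2 * xv w i.val - ∑ k ∈ range n, xv w k)
      + ((∑ k ∈ range i.val, yv w k) - ∑ k ∈ Ico (i.val+1) n, yv w k)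
      - w (Sum.inr (Sum.inr ())) := by
  simp only [Matrix.mulVec, dotProduct, Fintype.sum_sum_type]
  have h1 : ∑ j : Fin n, ImbRPS n (Sum.inr (Sum.inl i)) (Sum.inl j) * w (Sum.inl j)
      = 2 * xv w i.val - ∑ k ∈ range n, xv w k := by
    have : ∀ j : Fin n, ImbRPS n (Sum.inr (Sum.inl i)) (Sum.inl j) * w (Sum.inl j)
        = (if j = i then 2 * w (Sum.inl j) else 0) - w (Sum.inl j) := by
      intro j
      rw [entry_pr]
      by_cases h : i = j
      · simp [h]; ring
      · simp [h, Ne.symm h]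
    rw [Finset.sum_congr rfl fun j _ => this j, Finset.sum_sub_distrib, sum_fin_x,
      Finset.sum_ite_eq' Finset.univ i (fun j => 2 * w (Sum.inl j))]
    simp [xv_coe]
  have h2 : ∑ j : Fin n, ImbRPS n (Sum.inr (Sum.inl i)) (Sum.inr (Sum.inl j)) * w (Sum.inr (Sum.inl j))
      = (∑ k ∈ range i.val, yv w k) - ∑ k ∈ Ico (i.val+1) n, yv w k := by
    have e : ∀ j : Fin n, ImbRPS n (Sum.inr (Sum.inl i)) (Sum.inr (Sum.inl j)) * w (Sum.inr (Sum.inl j))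
        = (if j.val < i.val then yv w j.val else 0) - (if i.val < j.val then yv w j.val else 0) := by
      intro j
      rw [entry_pp, yv_coe]
      simp only [Fin.lt_def]
      rcases lt_trichotomy (i:ℕ) (j:ℕ) with h | h | h
      · simp [h, asymm h]
      · simp [h, lt_irrefl]
      · simp [h, asymm h]
    calc ∑ j : Fin n, ImbRPS n (Sum.inr (Sum.inl i)) (Sum.inr (Sum.inl j)) * w (Sum.inr (Sum.inl j))
        = ∑ j : Fin n, ((fun k => (if k < i.val then yv w k else 0)
            - (if i.val < k then yv w k else 0)) j.val) :=
          Finset.sum_congr rfl fun j _ => e j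
      _ = ∑ k ∈ range n, ((if k < i.val then yv w k else 0)
            - (if i.val < k then yv w k else 0)) :=
          Fin.sum_univ_eq_sum_range
            (fun k => (if k < i.val then yv w k else 0) - (if i.val < k then yv w k else 0)) n
      _ = (∑ k ∈ range i.val, yv w k) - ∑ k ∈ Ico (i.val+1) n, yv w k := by
          rw [Finset.sum_sub_distrib, sum_if_gt, sum_if_lt _ i.isLt.le]
  rw [h1, h2]
  simp [entry_ps]
  ring

lemma row_s (w : ImbVertex n → ℝ) (u : Unit) :
    (ImbRPS n).mulVec w (Sum.inr (Sum.inr u))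
    = (∑ k ∈ range n, yv w k) - ∑ k ∈ range n, xv w k := by
  simp only [Matrix.mulVec, dotProduct, Fintype.sum_sum_type]
  simp [entry_sr, entry_sp, entry_ss, sum_fin_x, sum_fin_y]
  ring

end ImbAux


namespace ImbAux
variable {n : ℕ}

lemma geom {a b : ℕ} (h : a ≤ b) :
    2 * ∑ k ∈ Ico a b, ((3:ℝ)⁻¹) ^ (k+1) = (3:ℝ)⁻¹ ^ a - (3:ℝ)⁻¹ ^ b := by
  induction b, h using Nat.le_induction with
  | base => simp
  | succ b hb ih =>
    rw [Finset.sum_Ico_succ_top hb, mul_add, ih, pow_succ]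
    ring

lemma geom0 (b : ℕ) :
    2 * ∑ k ∈ range b, ((3:ℝ)⁻¹) ^ (k+1) = 1 - (3:ℝ)⁻¹ ^ b := by
  rw [Finset.range_eq_Ico, geom (Nat.zero_le b), pow_zero]

lemma xv_nash {k : ℕ} (h : k < n) : xv (ImbNash n) k = (3:ℝ)⁻¹ ^ (k+1) := by
  simp [xv, h, ImbNash]

lemma yv_nash {k : ℕ} (h : k < n) : yv (ImbNash n) k = (3:ℝ)⁻¹ ^ (k+1) := by
  simp [yv, h, ImbNash]

lemma sum_x_nash_Ico {a : ℕ} (h : a ≤ n) :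
    2 * ∑ k ∈ Ico a n, xv (ImbNash n) k = (3:ℝ)⁻¹ ^ a - (3:ℝ)⁻¹ ^ n := by
  rw [Finset.sum_congr rfl fun k hk => xv_nash (Finset.mem_Ico.1 hk).2, geom h]

lemma sum_y_nash_Ico {a : ℕ} (h : a ≤ n) :
    2 * ∑ k ∈ Ico a n, yv (ImbNash n) k = (3:ℝ)⁻¹ ^ a - (3:ℝ)⁻¹ ^ n := by
  rw [Finset.sum_congr rfl fun k hk => yv_nash (Finset.mem_Ico.1 hk).2, geom h]

lemma sum_x_nash_range {a : ℕ} (h : a ≤ n) :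
    2 * ∑ k ∈ range a, xv (ImbNash n) k = 1 - (3:ℝ)⁻¹ ^ a := by
  rw [Finset.sum_congr rfl fun k hk => xv_nash (lt_of_lt_of_le (Finset.mem_range.1 hk) h), geom0]

lemma sum_y_nash_range {a : ℕ} (h : a ≤ n) :
    2 * ∑ k ∈ range a, yv (ImbNash n) k = 1 - (3:ℝ)⁻¹ ^ a := by
  rw [Finset.sum_congr rfl fun k hk => yv_nash (lt_of_lt_of_le (Finset.mem_range.1 hk) h), geom0]

lemma pow_succ_three (k : ℕ) : ((3:ℝ)⁻¹) ^ k = 3 * ((3:ℝ)⁻¹) ^ (k+1) := by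
  rw [pow_succ]; ring

lemma mulVec_nash_zero : (ImbRPS n).mulVec (ImbNash n) = 0 := by
  funext a
  rcases a with i | i | u
  · rw [row_r]
    have hA := sum_x_nash_Ico (a := i.val + 1) i.isLt
    have hB := sum_x_nash_range (a := i.val) i.isLt.le
    have hC := sum_y_nash_range (a := n) le_rfl
    have hY := yv_nash i.isLt
    have hs : ImbNash n (Sum.inr (Sum.inr ())) = (3:ℝ)⁻¹ ^ n := rfl
    have hp := pow_succ_three i.val
    rw [hY, hs]
    simp only [Pi.zero_apply]
    linarith
  · rw [row_p]
    have hA := sum_y_nash_Ico (a := i.val + 1) i.isLt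
    have hB := sum_y_nash_range (a := i.val) i.isLt.le
    have hC := sum_x_nash_range (a := n) le_rfl
    have hX := xv_nash i.isLt
    have hs : ImbNash n (Sum.inr (Sum.inr ())) = (3:ℝ)⁻¹ ^ n := rfl
    have hp := pow_succ_three i.val
    rw [hX, hs]
    simp only [Pi.zero_apply]
    linarith
  · rw [row_s]
    have : ∀ k ∈ range n, yv (ImbNash n) k = xv (ImbNash n) k := fun k hk => by
      rw [yv_nash (Finset.mem_range.1 hk), xv_nash (Finset.mem_range.1 hk)]
    rw [Finset.sum_congr rfl this]
    simp

lemma sum_vertex (w : ImbVertex n → ℝ) :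
    ∑ a, w a = (∑ k ∈ range n, xv w k) + ((∑ k ∈ range n, yv w k)
      + w (Sum.inr (Sum.inr ()))) := by
  rw [Fintype.sum_sum_type, Fintype.sum_sum_type, sum_fin_x, sum_fin_y]
  simp

lemma sum_nash : ∑ a, ImbNash n a = 1 := by
  rw [sum_vertex]
  have hx := sum_x_nash_range (n := n) le_rfl
  have hy := sum_y_nash_range (n := n) le_rfl
  have hs : ImbNash n (Sum.inr (Sum.inr ())) = (3:ℝ)⁻¹ ^ n := rfl
  rw [hs]
  linarith

end ImbAux

namespace ImbAux
variable {n : ℕ}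

section Unique
variable {w : ImbVertex n → ℝ} (hker : (ImbRPS n).mulVec w = 0)

lemma eqE (hker : (ImbRPS n).mulVec w = 0) {k : ℕ} (h : k < n) :
    xv w k - yv w k = 2 * ∑ j ∈ range k, (xv w j - yv w j) := by
  have hr := congrFun hker (Sum.inl (⟨k, h⟩ : Fin n))
  have hp := congrFun hker (Sum.inr (Sum.inl (⟨k, h⟩ : Fin n)))
  rw [row_r, Pi.zero_apply] at hr
  rw [row_p, Pi.zero_apply] at hp
  have hsx := sum_range_split (xv w) h
  have hsy := sum_range_split (yv w) h
  rw [Finset.sum_sub_distrib]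
  simp only at hr hp
  have hx : xv w k = w (Sum.inl (⟨k, h⟩ : Fin n)) := by simp [xv, h]
  have hy : yv w k = w (Sum.inr (Sum.inl (⟨k, h⟩ : Fin n))) := by simp [yv, h]
  linarith

lemma eqF (hker : (ImbRPS n).mulVec w = 0) {k : ℕ} (h : k < n) :
    xv w k + yv w k
      = 2 * (∑ j ∈ Ico (k+1) n, (xv w j + yv w j)) + 2 * w (Sum.inr (Sum.inr ())) := by
  have hr := congrFun hker (Sum.inl (⟨k, h⟩ : Fin n))
  have hp := congrFun hker (Sum.inr (Sum.inl (⟨k, h⟩ : Fin n)))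
  rw [row_r, Pi.zero_apply] at hr
  rw [row_p, Pi.zero_apply] at hp
  have hsx := sum_range_split (xv w) h
  have hsy := sum_range_split (yv w) h
  rw [Finset.sum_add_distrib]
  simp only at hr hp
  linarith

lemma xv_eq_yv (hker : (ImbRPS n).mulVec w = 0) (k : ℕ) : xv w k = yv w k := by
  induction k using Nat.strong_induction_on with
  | _ k ih =>
    by_cases h : k < n
    · have hE := eqE hker h
      have : ∑ j ∈ range k, (xv w j - yv w j) = 0 :=
        Finset.sum_eq_zero fun j hj => by
          have := ih j (Finset.mem_range.1 hj); linarith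
      rw [this] at hE
      linarith
    · simp [xv, yv, h]

lemma u_formula (hker : (ImbRPS n).mulVec w = 0) :
    ∀ m k : ℕ, k + m + 1 = n →
      xv w k + yv w k = 2 * w (Sum.inr (Sum.inr ())) * 3 ^ m := by
  intro m
  induction m with
  | zero =>
    intro k hk
    have h : k < n := by omega
    have hF := eqF hker h
    have : Ico (k+1) n = ∅ := by rw [Finset.Ico_eq_empty_iff]; omega
    rw [this, Finset.sum_empty] at hF
    rw [hF]; ring
  | succ m ih =>
    intro k hk
    have h : k < n := by omega
    have h1 : k + 1 < n := by omega
    have hF := eqF hker h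
    have hF1 := eqF hker h1
    have ihk := ih (k+1) (by omega)
    have hsplit : ∑ j ∈ Ico (k+1) n, (xv w j + yv w j)
        = (xv w (k+1) + yv w (k+1)) + ∑ j ∈ Ico (k+2) n, (xv w j + yv w j) :=
      Finset.sum_eq_sum_Ico_succ_bot h1 _
    have hpow : (3:ℝ) ^ (m+1) = 3 * 3 ^ m := by rw [pow_succ]; ring
    rw [hpow]
    linarith

end Unique

end ImbAux

/-- The distribution `ImbNash n` is a probability vector, everywhere positive, and is a
kernel vector of the imbalanced `(2n+1)`-RPS payoff matrix; hence the imbalanced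
`(2n+1)`-RPS is playable, and `ImbNash n` is its unique Nash equilibrium strategy. -/
theorem imbalanced_RPS_playable (n : ℕ) (hn : 1 ≤ n) :
    (∀ a, 0 ≤ ImbNash n a) ∧ (∑ a, ImbNash n a) = 1 ∧ (∀ a, 0 < ImbNash n a) ∧
      (ImbRPS n).mulVec (ImbNash n) = 0 ∧
      (∀ w : ImbVertex n → ℝ, (∀ a, 0 ≤ w a) → (∑ a, w a) = 1 →
        (ImbRPS n).mulVec w = 0 → w = ImbNash n) := by
  classical
  refine ⟨?_, ImbAux.sum_nash, ?_, ImbAux.mulVec_nash_zero, ?_⟩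
  · intro a; rcases a with i | i | u <;> simp [ImbNash] <;> positivity
  · intro a; rcases a with i | i | u <;> simp [ImbNash] <;> positivity
  · intro w hnn hsum hker
    set z := w (Sum.inr (Sum.inr ())) with hzdef
    have hxy := ImbAux.xv_eq_yv hker
    have hu := ImbAux.u_formula hker
    have hxk : ∀ k, k < n → ImbAux.xv w k = z * 3 ^ (n - 1 - k) := by
      intro k hk
      have h1 := hu (n - 1 - k) k (by omega)
      have h2 := hxy k
      linear_combination h1 / 2 + h2 / 2
    have hSx : ∑ k ∈ Finset.range n, ImbAux.xv w k = z * (((3:ℝ) ^ n - 1) / 2) := by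
      rw [Finset.sum_congr rfl fun k hk => hxk k (Finset.mem_range.1 hk),
        ← Finset.mul_sum, Finset.sum_range_reflect (fun j => (3:ℝ) ^ j) n,
        geom_sum_eq (by norm_num : (3:ℝ) ≠ 1) n]
      norm_num
    have hSy : ∑ k ∈ Finset.range n, ImbAux.yv w k = z * (((3:ℝ) ^ n - 1) / 2) := by
      rw [Finset.sum_congr rfl (fun k _ => (hxy k).symm), hSx]
    rw [ImbAux.sum_vertex, hSx, hSy, ← hzdef] at hsum
    have h3 : (3:ℝ) ^ n ≠ 0 := by positivity
    have hz3 : z * (3:ℝ) ^ n = 1 := by linear_combination hsum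
    have hz : z = ((3:ℝ) ^ n)⁻¹ := by
      field_simp at hz3 ⊢
      linarith
    funext a
    rcases a with i | i | u
    · have h := hxk i.val i.isLt
      rw [← ImbAux.xv_coe w i]
      rw [h, hz]
      show ((3:ℝ) ^ n)⁻¹ * 3 ^ (n - 1 - i.val) = (3:ℝ)⁻¹ ^ (i.val + 1)
      rw [inv_pow]
      rw [inv_mul_eq_iff_eq_mul₀ h3,
        eq_mul_inv_iff_mul_eq₀ (by positivity : (3:ℝ)^(i.val+1) ≠ 0), ← pow_add]
      congr 1
      omega
    · have h := hxk i.val i.isLt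
      rw [← ImbAux.yv_coe w i, ← hxy i.val]
      rw [h, hz]
      show ((3:ℝ) ^ n)⁻¹ * 3 ^ (n - 1 - i.val) = (3:ℝ)⁻¹ ^ (i.val + 1)
      rw [inv_pow]
      rw [inv_mul_eq_iff_eq_mul₀ h3,
        eq_mul_inv_iff_mul_eq₀ (by positivity : (3:ℝ)^(i.val+1) ≠ 0), ← pow_add]
      congr 1
      omega
    · cases u
      show z = (3:ℝ)⁻¹ ^ n
      rw [hz, inv_pow]
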